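/- arXiv:1812.08993 — 7 statements merged into one kernel-verified Lean document; each statement's English description precedes it below -/
import Mathlib

section
/- Let q be a prime power, G a subgroup of F_q^* of order r, and V an F_q-subspace of F_{q^m} of dimension t. Define φ(x) = ∏_{g ∈ G} ∏_{β ∈ V} (x + g + β). Then for any fixed γ ∈ F_{q^m}, φ is constant on the set ⋃_{g ∈ G} (γ·g + V); that is, for any α ∈ G and v ∈ V, φ(γ·α + v) = φ(γ). -/
open Polynomial Finset
open scoped Classical

/-- The polynomial `φ(x) = ∏_{g ∈ G} ∏_{β ∈ V} (x + g + β)`. -/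
noncomputable def phiPoly {Fq K : Type*} [Field Fq] [Field K] [Fintype K] [Algebra Fq K]
    (G : Subgroup Kˣ) (V : Submodule Fq K) : Polynomial K :=
  ∏ g : G, ∏ β : V, (X + C ((g : Kˣ) : K) + C (β : K))

/-- `φ` is constant on `⋃_{g ∈ G} (γ g + V)`:
for `α ∈ G` and `v ∈ V`, `φ(γ α + v) = φ(γ)`. -/
theorem stmt1 (q r m t : ℕ) (hq : IsPrimePow q) (hr : r ∣ q - 1)
    (Fq K : Type*) [Field Fq] [Fintype Fq] [Field K] [Fintype K] [Algebra Fq K]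
    (hcq : Fintype.card Fq = q) (hcK : Fintype.card K = q ^ m)
    (V : Submodule Fq K) (hV : Module.finrank Fq V = t)
    (G : Subgroup Kˣ) (hG : Nat.card G = r)
    (hGsub : ∀ g : G, ∃ a : Fq, algebraMap Fq K a = ((g : Kˣ) : K))
    (γ : K) (a : G) (v : V) :
    (phiPoly G V).eval (γ * ((a : Kˣ) : K) + (v : K)) = (phiPoly G V).eval γ := by
  classical
  obtain ⟨c, hc⟩ := hGsub a
  set A : K := ((a : Kˣ) : K) with hA
  have hA0 : A ≠ 0 := Units.ne_zero _
  have hc0 : c ≠ 0 := fun h => hA0 (by rw [← hc, h, map_zero])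
  have hAcard : A ^ Fintype.card G = 1 := by
    have h : a ^ Fintype.card G = 1 := pow_card_eq_one
    have := congrArg (fun x : G => ((x : Kˣ) : K)) h
    push_cast at this
    simpa using this
  -- the equivalence β ↦ c⁻¹ • (β + v) on V
  have hcc : c⁻¹ * c = 1 := inv_mul_cancel₀ hc0
  have hcc' : c * c⁻¹ = 1 := mul_inv_cancel₀ hc0
  let eV : V ≃ V :=
    { toFun := fun β => c⁻¹ • (β + v)
      invFun := fun β => c • β - v
      left_inv := fun β => by
        simp [smul_smul, hcc']
      right_inv := fun β => by
        simp [smul_smul, hcc] }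
  have key : ∀ (g : G) (β : V),
      γ * A + (v : K) + ((g : Kˣ) : K) + (β : K)
        = A * (γ + (((g * a⁻¹ : G) : Kˣ) : K) + ((eV β : V) : K)) := by
    intro g β
    have h1 : (((g * a⁻¹ : G) : Kˣ) : K) = ((g : Kˣ) : K) * A⁻¹ := by
      push_cast
      rw [hA]
    have h2 : ((eV β : V) : K) = A⁻¹ * ((β : K) + (v : K)) := by
      show ((c⁻¹ • (β + v) : V) : K) = _
      rw [Submodule.coe_smul, Algebra.smul_def, map_inv₀, hc]
      push_cast
      ring
    rw [h1, h2]
    field_simp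
    ring
  simp only [phiPoly, eval_prod, eval_add, eval_X, eval_C]
  calc (∏ g : G, ∏ β : V, (γ * A + (v : K) + ((g : Kˣ) : K) + (β : K)))
      = ∏ g : G, ∏ β : V,
          (A * (γ + (((g * a⁻¹ : G) : Kˣ) : K) + ((eV β : V) : K))) :=
        Finset.prod_congr rfl fun g _ => Finset.prod_congr rfl fun β _ => key g β
    _ = ∏ g : G, (A ^ Fintype.card V *
          ∏ β : V, (γ + (((g * a⁻¹ : G) : Kˣ) : K) + ((eV β : V) : K))) := by
        refine Finset.prod_congr rfl fun g _ => ?_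
        rw [Finset.prod_mul_distrib, Finset.prod_const, Finset.card_univ]
    _ = (A ^ Fintype.card V) ^ Fintype.card G *
          ∏ g : G, ∏ β : V, (γ + (((g * a⁻¹ : G) : Kˣ) : K) + ((eV β : V) : K)) := by
        rw [Finset.prod_mul_distrib, Finset.prod_const, Finset.card_univ]
    _ = ∏ g : G, ∏ β : V, (γ + (((g * a⁻¹ : G) : Kˣ) : K) + ((eV β : V) : K)) := by
        rw [← pow_mul, mul_comm (Fintype.card V), pow_mul, hAcard, one_pow, one_mul]
    _ = ∏ g : G, ∏ β : V, (γ + (((g * a⁻¹ : G) : Kˣ) : K) + ((β : V) : K)) := by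
        refine Finset.prod_congr rfl fun g _ => ?_
        exact Equiv.prod_comp eV fun β => γ + (((g * a⁻¹ : G) : Kˣ) : K) + ((β : V) : K)
    _ = ∏ g : G, ∏ β : V, (γ + ((g : Kˣ) : K) + ((β : V) : K)) := by
        exact Equiv.prod_comp (Equiv.mulRight a⁻¹)
          fun g => ∏ β : V, (γ + ((g : Kˣ) : K) + ((β : V) : K))
end

section
/- With notation as above (φ(x) = ∏_{g ∈ G} ∏_{β ∈ V} (x + g + β), and α_1 = 0, α_2, ..., α_ℓ chosen so that V and {α_i g + V : 2 ≤ i ≤ ℓ, g ∈ G} are pairwise distinct cosets of V): if 1 ≤ i ≠ j ≤ ℓ, then φ(α) ≠ φ(β) for every α ∈ ⋃_{g ∈ G}(α_i g + V) and every β ∈ ⋃_{g ∈ G}(α_j g + V). -/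
set_option maxHeartbeats 1000000
open Polynomial Finset
open scoped Classical

/-- The (additive) coset `a + V` of a set `V`. -/
def coset {K : Type*} [Add K] (V : Set K) (a : K) : Set K := {x | ∃ v ∈ V, x = a + v}

section Aux
set_option linter.unusedSectionVars false
variable {Fq K : Type*} [Field Fq] [Fintype Fq] [Field K] [Fintype K] [Algebra Fq K]
variable (G : Subgroup Kˣ) (V : Submodule Fq K)

lemma phi_eval (x : K) :
    (phiPoly G V).eval x = ∏ g : G, ∏ β : V, (x + ((g : Kˣ) : K) + (β : K)) := by
  simp [phiPoly, eval_prod]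

lemma phi_eval_add (x : K) (v : V) :
    (phiPoly G V).eval (x + (v : K)) = (phiPoly G V).eval x := by
  rw [phi_eval, phi_eval]
  refine Finset.prod_congr rfl fun g _ => ?_
  rw [← Equiv.prod_comp (Equiv.addLeft v) (fun β : V => x + ((g : Kˣ) : K) + (β : K))]
  refine Finset.prod_congr rfl fun β _ => ?_
  simp only [Equiv.coe_addLeft]
  push_cast
  ring

lemma phi_eval_mul (hGsub : ∀ g : G, ∃ a : Fq, algebraMap Fq K a = ((g : Kˣ) : K))
    (x : K) (h : G) :
    (phiPoly G V).eval (x * ((h : Kˣ) : K)) = (phiPoly G V).eval x := by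
  obtain ⟨a, ha⟩ := hGsub h
  have ha0 : a ≠ 0 := by
    intro h0
    rw [h0, map_zero] at ha
    exact (Units.ne_zero (h : Kˣ)) ha.symm
  have key : ∀ (g : G) (β : V),
      x * ((h : Kˣ) : K) + (((g * h : G) : Kˣ) : K) + (((Units.mk0 a ha0 : Fqˣ) • β : V) : K)
        = (x + ((g : Kˣ) : K) + (β : K)) * ((h : Kˣ) : K) := by
    intro g β
    have hcoe : (((Units.mk0 a ha0 : Fqˣ) • β : V) : K) = algebraMap Fq K a * (β : K) := by
      simp [Submodule.coe_smul, Algebra.smul_def]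
    rw [hcoe, ha]
    push_cast
    ring
  have h1 : (phiPoly G V).eval (x * ((h : Kˣ) : K))
      = ∏ g : G, ∏ β : V, ((x + ((g : Kˣ) : K) + (β : K)) * ((h : Kˣ) : K)) := by
    rw [phi_eval]
    rw [← Equiv.prod_comp (Equiv.mulRight h)
      (fun g : G => ∏ β : V, (x * ((h : Kˣ) : K) + ((g : Kˣ) : K) + (β : K)))]
    refine Finset.prod_congr rfl fun g _ => ?_
    rw [← Equiv.prod_comp (MulAction.toPerm (Units.mk0 a ha0 : Fqˣ))
      (fun β : V => x * ((h : Kˣ) : K) + (((Equiv.mulRight h) g : Kˣ) : K) + (β : K))]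
    refine Finset.prod_congr rfl fun β _ => ?_
    simpa using key g β
  rw [h1]
  have h2 : ∀ g : G, ∏ β : V, ((x + ((g : Kˣ) : K) + (β : K)) * ((h : Kˣ) : K))
      = (∏ β : V, (x + ((g : Kˣ) : K) + (β : K))) * ((h : Kˣ) : K) ^ Fintype.card V := by
    intro g
    rw [Finset.prod_mul_distrib, Finset.prod_const, Finset.card_univ]
  simp_rw [h2]
  rw [Finset.prod_mul_distrib, Finset.prod_const, Finset.card_univ, ← pow_mul, phi_eval]
  have hone : ((h : Kˣ) : K) ^ (Fintype.card V * Fintype.card G) = 1 := by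
    have hcard : h ^ Fintype.card G = 1 := pow_card_eq_one
    calc ((h : Kˣ) : K) ^ (Fintype.card V * Fintype.card G)
        = ((((h ^ Fintype.card G : G) : Kˣ) : K)) ^ Fintype.card V := by
          push_cast [pow_mul']; ring
      _ = 1 := by rw [hcard]; simp
  rw [hone, mul_one]

lemma coset_eq_iff (x y : K) : coset (V : Set K) x = coset (V : Set K) y ↔ x - y ∈ V := by
  constructor
  · intro h
    have hx : x ∈ coset (V : Set K) x := ⟨0, V.zero_mem, by simp⟩
    rw [h] at hx
    obtain ⟨v, hv, hxv⟩ := hx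
    have : x - y = v := by rw [hxv]; ring
    rwa [this]
  · intro h
    ext w
    constructor
    · rintro ⟨v, hv, rfl⟩
      exact ⟨(x - y) + v, V.add_mem h hv, by ring⟩
    · rintro ⟨v, hv, rfl⟩
      exact ⟨(y - x) + v, V.add_mem (by simpa using V.neg_mem h) hv, by ring⟩

lemma coset_img (x : K) : coset (V : Set K) x = (fun v => x + v) '' (V : Set K) := by
  ext w
  simp only [coset, Set.mem_setOf_eq, Set.mem_image, SetLike.mem_coe]
  constructor
  · rintro ⟨v, hv, rfl⟩; exact ⟨v, hv, rfl⟩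
  · rintro ⟨v, hv, rfl⟩; exact ⟨v, hv, rfl⟩

lemma coset_card (x : K) : (coset (V : Set K) x).toFinset.card = Fintype.card V := by
  rw [coset_img]
  rw [Set.toFinset_image, Finset.card_image_of_injective _ (add_right_injective x)]
  simp [Set.toFinset_card]

lemma coset_eq_of_mem {x y z : K} (hx : z ∈ coset (V : Set K) x) (hy : z ∈ coset (V : Set K) y) :
    coset (V : Set K) x = coset (V : Set K) y := by
  obtain ⟨v, hv, rfl⟩ := hx
  obtain ⟨w, hw, hz⟩ := hy
  rw [coset_eq_iff]
  have hxy : x - y = w - v := by linear_combination hz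
  rw [hxy]
  exact V.sub_mem hw hv

noncomputable def cosetF (x : K) : Finset K :=
  Finset.image (fun v : V => x + (v : K)) Finset.univ

lemma mem_cosetF {x z : K} : z ∈ cosetF V x ↔ z ∈ coset (V : Set K) x := by
  simp only [cosetF, Finset.mem_image, Finset.mem_univ, true_and, coset, Set.mem_setOf_eq]
  constructor
  · rintro ⟨v, rfl⟩; exact ⟨v, v.2, rfl⟩
  · rintro ⟨v, hv, rfl⟩; exact ⟨⟨v, hv⟩, rfl⟩

lemma cosetF_card (x : K) : (cosetF V x).card = Fintype.card V := by
  have hi : Function.Injective (fun v : V => x + (v : K)) := by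
    intro a b h
    exact Subtype.ext (add_right_injective x h)
  rw [cosetF, Finset.card_image_of_injective _ hi, Finset.card_univ]

lemma phi_natDegree : (phiPoly G V).natDegree = Fintype.card G * Fintype.card V := by
  have hfac : ∀ (g : G) (β : V),
      (X + C ((g : Kˣ) : K) + C ((β : K))) = X + C (((g : Kˣ) : K) + (β : K)) := by
    intro g β
    rw [C_add, add_assoc]
  have hinner0 : ∀ g : G, (∏ β : V, (X + C ((g : Kˣ) : K) + C ((β : K)))) ≠ 0 := by
    intro g
    rw [Finset.prod_ne_zero_iff]
    intro β _
    rw [hfac]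
    exact X_add_C_ne_zero _
  have hinner : ∀ g : G, (∏ β : V, (X + C ((g : Kˣ) : K) + C ((β : K)))).natDegree
      = Fintype.card V := by
    intro g
    rw [natDegree_prod _ _ (fun β _ => by rw [hfac]; exact X_add_C_ne_zero _)]
    simp only [hfac, natDegree_X_add_C]
    rw [Finset.sum_const, Finset.card_univ, smul_eq_mul, mul_one]
  rw [phiPoly, natDegree_prod _ _ (fun g _ => hinner0 g)]
  simp [hinner, mul_comm]

lemma main_aux (hGsub : ∀ g : G, ∃ a : Fq, algebraMap Fq K a = ((g : Kˣ) : K))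
    {ι : Type*} (i0 : ι) (α : ι → K) (hα0 : α i0 = 0)
    (hne : ∀ (i : ι) (g : G), i ≠ i0 →
      coset (V : Set K) (α i * ((g : Kˣ) : K)) ≠ coset (V : Set K) 0)
    (hinj : ∀ (i j : ι) (gi gj : G), i ≠ i0 → j ≠ i0 →
      coset (V : Set K) (α i * ((gi : Kˣ) : K)) = coset (V : Set K) (α j * ((gj : Kˣ) : K)) →
      i = j ∧ gi = gj)
    (i j : ι) (hij : i ≠ j) (hj0 : j ≠ i0) :
    (phiPoly G V).eval (α i) ≠ (phiPoly G V).eval (α j) := by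
  intro hc
  set c := (phiPoly G V).eval (α i) with hcdef
  set p := phiPoly G V - C c with hpdef
  set N := Fintype.card G * Fintype.card V with hNdef
  have hcardVpos : 0 < Fintype.card V := Fintype.card_pos
  have hcardGpos : 0 < Fintype.card G := Fintype.card_pos
  have hN1 : 1 ≤ N := Nat.one_le_iff_ne_zero.mpr (by positivity)
  have hdegφ : (phiPoly G V).natDegree = N := phi_natDegree G V
  have hp0 : p ≠ 0 := by
    intro h0
    have hφ : phiPoly G V = C c := by rwa [hpdef, sub_eq_zero] at h0
    have : (phiPoly G V).natDegree = 0 := by rw [hφ]; exact natDegree_C c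
    omega
  have hdegp : p.natDegree = N := by rw [hpdef, natDegree_sub_C, hdegφ]
  set Fi := Finset.univ.biUnion
    (fun g : G => cosetF V (α i * ((g : Kˣ) : K))) with hFi
  set Fj := Finset.univ.biUnion
    (fun g : G => cosetF V (α j * ((g : Kˣ) : K))) with hFj
  have hevalF : ∀ (k : ι) (z : K), z ∈ Finset.univ.biUnion
      (fun g : G => cosetF V (α k * ((g : Kˣ) : K))) →
      (phiPoly G V).eval z = (phiPoly G V).eval (α k) := by
    intro k z hz
    obtain ⟨g, _, hz⟩ := Finset.mem_biUnion.mp hz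
    rw [mem_cosetF] at hz
    obtain ⟨v, hv, rfl⟩ := hz
    rw [phi_eval_add G V _ ⟨v, hv⟩, phi_eval_mul G V hGsub]
  have hroots : Fi ∪ Fj ⊆ p.roots.toFinset := by
    intro z hz
    rw [Multiset.mem_toFinset, mem_roots hp0]
    rcases Finset.mem_union.mp hz with hz | hz
    · simp [IsRoot, hpdef, hevalF i z hz, hcdef]
    · have hzc : (phiPoly G V).eval z = c := by rw [hevalF j z hz, hc]
      simp [IsRoot, hpdef, hzc]
  have hdisj : Disjoint Fi Fj := by
    rw [Finset.disjoint_left]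
    intro z hzi hzj
    obtain ⟨g, _, hzi⟩ := Finset.mem_biUnion.mp hzi
    obtain ⟨g', _, hzj⟩ := Finset.mem_biUnion.mp hzj
    rw [mem_cosetF] at hzi hzj
    have heq := coset_eq_of_mem V hzi hzj
    by_cases hi0 : i = i0
    · subst hi0
      rw [hα0, zero_mul] at heq
      exact hne j g' hj0 heq.symm
    · exact hij (hinj i j g g' hi0 hj0 heq).1
  have hFjcard : Fj.card = N := by
    rw [hFj, Finset.card_biUnion]
    · simp only [cosetF_card]
      rw [Finset.sum_const, Finset.card_univ, smul_eq_mul, hNdef]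
    · intro g _ g' _ hgg'
      rw [Function.onFun, Finset.disjoint_left]
      intro z hz hz'
      rw [mem_cosetF] at hz hz'
      exact hgg' (hinj j j g g' hj0 hj0 (coset_eq_of_mem V hz hz')).2
  have hFicard : Fintype.card V ≤ Fi.card := by
    have hsub : cosetF V (α i * (((1 : G) : Kˣ) : K)) ⊆ Fi :=
      Finset.subset_biUnion_of_mem (fun g : G => cosetF V (α i * ((g : Kˣ) : K)))
        (Finset.mem_univ (1 : G))
    have hle := Finset.card_le_card hsub
    rwa [cosetF_card] at hle
  have hch : (Fi ∪ Fj).card ≤ N := by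
    calc (Fi ∪ Fj).card ≤ p.roots.toFinset.card := Finset.card_le_card hroots
      _ ≤ Multiset.card p.roots := Multiset.toFinset_card_le _
      _ ≤ p.natDegree := p.card_roots'
      _ = N := hdegp
  rw [Finset.card_union_of_disjoint hdisj, hFjcard] at hch
  omega

end Aux

/-- `φ` takes distinct values on `⋃_g (α_i g + V)` and `⋃_g (α_j g + V)`
for `i ≠ j`. -/
theorem stmt2 (q r m t : ℕ) (hq : IsPrimePow q) (hm : 1 ≤ m) (ht : t ≤ m - 1)
    (hr : r ∣ q - 1)
    (Fq K : Type*) [Field Fq] [Fintype Fq] [Field K] [Fintype K] [Algebra Fq K]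
    (hcq : Fintype.card Fq = q) (hcK : Fintype.card K = q ^ m)
    (V : Submodule Fq K) (hV : Module.finrank Fq V = t)
    (G : Subgroup Kˣ) (hG : Nat.card G = r)
    (hGsub : ∀ g : G, ∃ a : Fq, algebraMap Fq K a = ((g : Kˣ) : K))
    (α : Fin ((q ^ (m - t) - 1) / r + 1) → K) (hα0 : α 0 = 0)
    (hne : ∀ (i : Fin ((q ^ (m - t) - 1) / r + 1)) (g : G), i ≠ 0 →
      coset (V : Set K) (α i * ((g : Kˣ) : K)) ≠ coset (V : Set K) 0)
    (hinj : ∀ (i j : Fin ((q ^ (m - t) - 1) / r + 1)) (gi gj : G), i ≠ 0 → j ≠ 0 →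
      coset (V : Set K) (α i * ((gi : Kˣ) : K)) = coset (V : Set K) (α j * ((gj : Kˣ) : K)) →
      i = j ∧ gi = gj)
    (hcover : (⋃ i, ⋃ g : G, coset (V : Set K) (α i * ((g : Kˣ) : K))) = Set.univ)
    (i j : Fin ((q ^ (m - t) - 1) / r + 1)) (hij : i ≠ j) (a b : K)
    (ha : a ∈ ⋃ g : G, coset (V : Set K) (α i * ((g : Kˣ) : K)))
    (hb : b ∈ ⋃ g : G, coset (V : Set K) (α j * ((g : Kˣ) : K))) :
    (phiPoly G V).eval a ≠ (phiPoly G V).eval b := by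
  have heval : ∀ (k : Fin ((q ^ (m - t) - 1) / r + 1)) (z : K),
      z ∈ (⋃ g : G, coset (V : Set K) (α k * ((g : Kˣ) : K))) →
      (phiPoly G V).eval z = (phiPoly G V).eval (α k) := by
    intro k z hz
    obtain ⟨g, hz⟩ := Set.mem_iUnion.mp hz
    obtain ⟨v, hv, rfl⟩ := hz
    rw [phi_eval_add G V _ ⟨v, hv⟩, phi_eval_mul G V hGsub]
  rw [heval i a ha, heval j b hb]
  by_cases hj0 : j = 0
  · have hi0 : i ≠ 0 := fun h => hij (h.trans hj0.symm)
    exact (main_aux G V hGsub 0 α hα0 hne hinj j i (Ne.symm hij) hi0).symm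
  · exact main_aux G V hGsub 0 α hα0 hne hinj i j hij hj0
end

section
/- Let θ be a generator of the cyclic group F_{q^m}^*, let G be a subgroup of F_q^* of order r ≥ 2, and let φ(x) = ∏_{g ∈ G} ∏_{β ∈ V} (x + g + β) with V an F_q-subspace of dimension t ≤ m-1. Let α_i (2 ≤ i ≤ ℓ) be as in the coset partition lemma (in particular α_i ∉ V). Then for every 1 ≤ τ ≤ q^m - 2, the polynomials φ(θ^τ·x + α_i) and φ(x + α_i) are not equal. -/
open Polynomial Finset
open scoped Classical

/-- for `r ≥ 2`, `α_i ∉ V` a partition representative and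
`1 ≤ τ ≤ q^m - 2`, the polynomials `φ(θ^τ x + α_i)` and `φ(x + α_i)` differ. -/
theorem stmt4 (q r m t : ℕ) (hq : IsPrimePow q) (hm : 1 ≤ m) (ht : t ≤ m - 1)
    (hr : r ∣ q - 1)
    (Fq K : Type*) [Field Fq] [Fintype Fq] [Field K] [Fintype K] [Algebra Fq K]
    (hcq : Fintype.card Fq = q) (hcK : Fintype.card K = q ^ m)
    (V : Submodule Fq K) (hV : Module.finrank Fq V = t)
    (G : Subgroup Kˣ) (hG : Nat.card G = r)
    (hGsub : ∀ g : G, ∃ a : Fq, algebraMap Fq K a = ((g : Kˣ) : K))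
    (hr2 : 2 ≤ r)
    (θ : Kˣ) (hθ : ∀ x : Kˣ, x ∈ Subgroup.zpowers θ)
    (α : Fin ((q ^ (m - t) - 1) / r + 1) → K) (hα0 : α 0 = 0)
    (hne : ∀ (i : Fin ((q ^ (m - t) - 1) / r + 1)) (g : G), i ≠ 0 →
      coset (V : Set K) (α i * ((g : Kˣ) : K)) ≠ coset (V : Set K) 0)
    (hinj : ∀ (i j : Fin ((q ^ (m - t) - 1) / r + 1)) (gi gj : G), i ≠ 0 → j ≠ 0 →
      coset (V : Set K) (α i * ((gi : Kˣ) : K)) = coset (V : Set K) (α j * ((gj : Kˣ) : K)) →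
      i = j ∧ gi = gj)
    (hcover : (⋃ i, ⋃ g : G, coset (V : Set K) (α i * ((g : Kˣ) : K))) = Set.univ)
    (i : Fin ((q ^ (m - t) - 1) / r + 1)) (hi : i ≠ 0) :
    ∀ τ : ℕ, 1 ≤ τ → τ ≤ q ^ m - 2 →
      (phiPoly G V).comp (C (((θ : Kˣ) : K) ^ τ) * X + C (α i)) ≠
      (phiPoly G V).comp (X + C (α i)) := by
  intro τ hτ1 hτ2 heq
  -- notation
  set P : Polynomial K := phiPoly G V with hP
  set a : K := ((θ : Kˣ) : K) ^ τ with ha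
  have hq2 : 2 ≤ q := hq.two_le
  have hqm : 2 ≤ q ^ m := le_trans hq2 (Nat.le_self_pow (by omega) q)
  have hr0 : 0 < r := by omega
  -- θ has order q^m - 1
  have hθord : orderOf θ = q ^ m - 1 := by
    have h := orderOf_eq_card_of_forall_mem_zpowers hθ
    rwa [Nat.card_eq_fintype_card, Fintype.card_units, hcK] at h
  -- a ≠ 1 and a ≠ 0
  have ha1 : a ≠ 1 := by
    intro h
    have hu : θ ^ τ = 1 := Units.ext (by rw [Units.val_pow_eq_pow_val, ← ha, h]; rfl)
    have hdvd := orderOf_dvd_of_pow_eq_one hu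
    rw [hθord] at hdvd
    have hle := Nat.le_of_dvd (by omega) hdvd
    omega
  have ha0 : a ≠ 0 := by
    rw [ha]
    exact pow_ne_zero _ (Units.ne_zero θ)
  -- monicity and degree of P
  have hmonicin : ∀ g : G, (∏ β : V, (X + C ((g:Kˣ):K) + C ((β:K)))).Monic := by
    intro g
    apply monic_prod_of_monic
    intro b _
    rw [add_assoc, ← C_add]
    exact monic_X_add_C _
  have hPmonic : P.Monic := monic_prod_of_monic _ _ fun g _ => hmonicin g
  have hNdeg : P.natDegree = Fintype.card G * Fintype.card V := by
    rw [hP, phiPoly, natDegree_prod_of_monic _ _ (fun g _ => hmonicin g),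
      Finset.sum_congr rfl (fun g _ => natDegree_prod_of_monic _ _ (fun b _ => by
        rw [add_assoc, ← C_add]; exact monic_X_add_C _))]
    simp
  -- leading coefficients give a ^ natDegree P = 1
  have haN : a ^ P.natDegree = 1 := by
    have hlc := congrArg leadingCoeff heq
    rw [leadingCoeff_comp (by rw [natDegree_linear ha0]; omega),
      leadingCoeff_comp (by rw [natDegree_X_add_C]; omega),
      leadingCoeff_linear ha0, hPmonic.leadingCoeff,
      (monic_X_add_C (α i)).leadingCoeff, one_mul, one_mul, one_pow] at hlc
    exact hlc
  -- order of θ^τ divides r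
  have hcG : Fintype.card G = r := by rw [Fintype.card_eq_nat_card, hG]
  have hcVdvd : Fintype.card V ∣ q ^ m := by
    have h := AddSubgroup.card_addSubgroup_dvd_card (V.toAddSubgroup)
    rwa [Nat.card_eq_fintype_card, Nat.card_eq_fintype_card, hcK] at h
  have hcop : Nat.Coprime (q ^ m - 1) (Fintype.card V) := by
    apply Nat.Coprime.coprime_dvd_right hcVdvd
    have he : q ^ m - 1 + 1 = q ^ m := by omega
    rw [← he]
    simp [Nat.add_comm, Nat.coprime_add_self_left]
  have har : a ^ r = 1 := by
    have huN : (θ ^ τ) ^ P.natDegree = 1 := Units.ext (by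
      rw [Units.val_pow_eq_pow_val, Units.val_pow_eq_pow_val, ← ha, haN]; rfl)
    have h1 : orderOf (θ ^ τ) ∣ r * Fintype.card V := by
      rw [← hcG, ← hNdeg]
      exact orderOf_dvd_of_pow_eq_one huN
    have h2 : orderOf (θ ^ τ) ∣ q ^ m - 1 := by
      rw [← hθord]
      exact orderOf_pow_dvd τ
    have h3 : orderOf (θ ^ τ) ∣ r :=
      (Nat.Coprime.coprime_dvd_left h2 hcop).dvd_of_dvd_mul_right h1
    have h4 : (θ ^ τ) ^ r = 1 := orderOf_dvd_iff_pow_eq_one.mp h3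
    rw [ha, ← Units.val_pow_eq_pow_val, ← Units.val_pow_eq_pow_val, h4]
    rfl
  -- θ^τ lies in G (as a value)
  have hginG : ∃ g : G, ((g:Kˣ):K) = a := by
    have hinjG : Function.Injective (fun g : G => ((g:Kˣ):K)) := by
      intro x y h
      exact Subtype.ext (Units.ext h)
    set Gs : Finset K := Finset.univ.image (fun g : G => ((g:Kˣ):K)) with hGs
    have hcard : Gs.card = r := by
      rw [hGs, Finset.card_image_of_injective _ hinjG, Finset.card_univ, hcG]
    have hsub : Gs ⊆ Polynomial.nthRootsFinset r (1 : K) := by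
      intro x hx
      rw [hGs, Finset.mem_image] at hx
      obtain ⟨g, -, rfl⟩ := hx
      rw [Polynomial.mem_nthRootsFinset hr0]
      have h1 : g ^ r = 1 := by
        rw [← hG, ← Fintype.card_eq_nat_card]
        exact pow_card_eq_one
      calc ((g:Kˣ):K) ^ r = (((g ^ r : G) : Kˣ) : K) := by push_cast; ring
        _ = 1 := by rw [h1]; rfl
    have hle : (Polynomial.nthRootsFinset r (1 : K)).card ≤ r := by
      rw [Polynomial.nthRootsFinset_def]
      exact le_trans (Multiset.toFinset_card_le _) (Polynomial.card_nthRoots r 1)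
    have hGsEq : Gs = Polynomial.nthRootsFinset r (1 : K) :=
      Finset.eq_of_subset_of_card_le hsub (by omega)
    have hmem : a ∈ Gs := by
      rw [hGsEq, Polynomial.mem_nthRootsFinset hr0]
      exact har
    rw [hGs, Finset.mem_image] at hmem
    obtain ⟨g, -, h⟩ := hmem
    exact ⟨g, h⟩
  obtain ⟨g₀, hg₀⟩ := hginG
  obtain ⟨c, hc⟩ := hGsub g₀
  rw [hg₀] at hc
  have hc0 : c ≠ 0 := by
    intro h
    apply ha0
    rw [← hc, h, map_zero]
  -- the zero set of P, modulo V
  set f : G → K ⧸ V := fun g => Submodule.Quotient.mk (-((g:Kˣ):K)) with hf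
  set T : Finset (K ⧸ V) := Finset.univ.image f with hT
  have hZT : ∀ x : K, (P.eval x = 0 ↔ (Submodule.Quotient.mk x : K ⧸ V) ∈ T) := by
    intro x
    rw [hP, phiPoly]
    simp only [eval_prod, eval_add, eval_X, eval_C]
    rw [Finset.prod_eq_zero_iff]
    constructor
    · rintro ⟨g, -, hg⟩
      rw [Finset.prod_eq_zero_iff] at hg
      obtain ⟨b, -, hb⟩ := hg
      rw [hT, Finset.mem_image]
      refine ⟨g, Finset.mem_univ _, ?_⟩
      rw [hf, Submodule.Quotient.eq]
      have h2 : -((g:Kˣ):K) - x = (b:K) := by linear_combination -hb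
      rw [h2]
      exact b.2
    · intro hx
      rw [hT, Finset.mem_image] at hx
      obtain ⟨g, -, hg⟩ := hx
      rw [hf] at hg
      replace hg := hg.symm
      rw [Submodule.Quotient.eq] at hg
      refine ⟨g, Finset.mem_univ _, ?_⟩
      rw [Finset.prod_eq_zero_iff]
      have hmem : -(x + ((g:Kˣ):K)) ∈ V := by
        have h := V.neg_mem hg
        have e : -(x - -((g:Kˣ):K)) = -(x + ((g:Kˣ):K)) := by ring
        rwa [e] at h
      exact ⟨⟨-(x + ((g:Kˣ):K)), hmem⟩, Finset.mem_univ _, by push_cast; ring⟩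
  -- evaluation form of the hypothesis
  have hEv : ∀ y : K, P.eval (a * y + α i) = P.eval (y + α i) := by
    intro y
    have h := congrArg (eval y) heq
    rw [eval_comp, eval_comp] at h
    simpa using h
  -- multiplication by c preserves T
  have hcmulT : ∀ u : K ⧸ V, (u ∈ T ↔ c • u ∈ T) := by
    have hsubs : ∀ t ∈ T, c • t ∈ T := by
      intro t ht
      rw [hT, Finset.mem_image] at ht ⊢
      obtain ⟨g, -, rfl⟩ := ht
      refine ⟨g₀ * g, Finset.mem_univ _, ?_⟩
      have e : -((((g₀ * g : G) : Kˣ)) : K) = c • (-((g:Kˣ):K)) := by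
        rw [Algebra.smul_def, hc, ← hg₀]
        push_cast
        ring
      rw [hf, ← Submodule.Quotient.mk_smul, ← e]
    have hinj : Function.Injective (fun u : K ⧸ V => c • u) :=
      smul_right_injective _ hc0
    have himg : T.image (fun u => c • u) = T :=
      Finset.eq_of_subset_of_card_le
        (fun x hx => by
          rw [Finset.mem_image] at hx
          obtain ⟨t, ht, rfl⟩ := hx
          exact hsubs t ht)
        (le_of_eq (Finset.card_image_of_injective _ hinj).symm)
    intro u
    constructor
    · exact hsubs u
    · intro hcu
      rw [← himg, Finset.mem_image] at hcu
      obtain ⟨t, ht, htc⟩ := hcu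
      rwa [← hinj htc]
  have hscale : ∀ x : K, (P.eval x = 0 ↔ P.eval (a * x) = 0) := by
    intro x
    rw [hZT, hZT]
    have e : (Submodule.Quotient.mk (a * x) : K ⧸ V) = c • Submodule.Quotient.mk x := by
      rw [← Submodule.Quotient.mk_smul]
      congr 1
      rw [Algebra.smul_def, hc]
    rw [e]
    exact hcmulT _
  -- translation invariance of the zero set
  set δ : K := (a - 1) * α i with hδ
  have hkey : ∀ x : K, (P.eval x = 0 ↔ P.eval (x + δ) = 0) := by
    intro x
    have e2 : a * (a⁻¹ * (x - α i)) + α i = x := by field_simp; ring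
    have e1 : a * (a⁻¹ * (x - α i) + α i) = x + δ := by
      rw [hδ]; field_simp; ring
    calc P.eval x = 0 ↔ P.eval (a * (a⁻¹ * (x - α i)) + α i) = 0 := by rw [e2]
      _ ↔ P.eval ((a⁻¹ * (x - α i)) + α i) = 0 := by rw [hEv]
      _ ↔ P.eval (a * ((a⁻¹ * (x - α i)) + α i)) = 0 := hscale _
      _ ↔ P.eval (x + δ) = 0 := by rw [e1]
  -- translation by mk δ preserves T
  have htT : ∀ t ∈ T, t + Submodule.Quotient.mk δ ∈ T := by
    intro t ht
    rw [hT, Finset.mem_image] at ht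
    obtain ⟨g, -, rfl⟩ := ht
    have h0 : P.eval (-((g:Kˣ):K)) = 0 := by
      rw [hZT]
      rw [hT, Finset.mem_image]
      exact ⟨g, Finset.mem_univ _, rfl⟩
    have h1 : P.eval (-((g:Kˣ):K) + δ) = 0 := (hkey _).mp h0
    have h2 := (hZT _).mp h1
    rwa [Submodule.Quotient.mk_add] at h2
  -- hence T.card • mk δ = 0
  have hTcard : T.card • (Submodule.Quotient.mk δ : K ⧸ V) = 0 := by
    have hinj : Function.Injective (fun u : K ⧸ V => u + Submodule.Quotient.mk δ) :=
      fun x y h => by simpa using h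
    have himg : T.image (fun u => u + Submodule.Quotient.mk δ) = T :=
      Finset.eq_of_subset_of_card_le
        (fun x hx => by
          rw [Finset.mem_image] at hx
          obtain ⟨t, ht, rfl⟩ := hx
          exact htT t ht)
        (le_of_eq (Finset.card_image_of_injective _ hinj).symm)
    have hsum : ∑ t ∈ T, t = ∑ t ∈ T, (t + Submodule.Quotient.mk δ) := by
      conv_lhs => rw [← himg]
      rw [Finset.sum_image (fun x _ y _ h => hinj h)]
    rw [Finset.sum_add_distrib, Finset.sum_const] at hsum
    exact (left_eq_add.mp hsum)
  -- T.card divides r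
  have hVmul : ∀ (g : G) (x : K), x ∈ V → x * ((g:Kˣ):K) ∈ V := by
    intro g x hx
    obtain ⟨cg, hcg⟩ := hGsub g
    rw [← hcg, mul_comm, ← Algebra.smul_def]
    exact V.smul_mem _ hx
  have hkdvd : T.card ∣ r := by
    have hfiber : ∀ g' : G,
        (Finset.univ.filter fun g : G => f g = f g').card
          = (Finset.univ.filter fun g : G => f g = f 1).card := by
      intro g'
      apply Finset.card_bij' (fun h _ => h * g'⁻¹) (fun h _ => h * g')
      · intro h hh
        simp only [Finset.mem_filter, Finset.mem_univ, true_and, hf,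
          Submodule.Quotient.eq] at hh ⊢
        have e : -((((h * g'⁻¹ : G) : Kˣ)) : K) - -(((1:G):Kˣ):K)
            = (-(h:Kˣ) - -((g':Kˣ):K)) * ((g'⁻¹ : G) : Kˣ) := by
          push_cast
          field_simp
        rw [e]
        exact hVmul _ _ hh
      · intro h hh
        simp only [Finset.mem_filter, Finset.mem_univ, true_and, hf,
          Submodule.Quotient.eq] at hh ⊢
        have e : -((((h * g' : G) : Kˣ)) : K) - -(((g':G):Kˣ):K)
            = (-(h:Kˣ) - -(((1:G):Kˣ):K)) * ((g' : G) : Kˣ) := by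
          push_cast
          ring
        rw [e]
        exact hVmul _ _ hh
      · intro h _; simp [mul_assoc]
      · intro h _; simp [mul_assoc]
    have hsum : Fintype.card G
        = ∑ t ∈ T, (Finset.univ.filter fun g : G => f g = t).card := by
      rw [← Finset.card_univ, hT]
      exact Finset.card_eq_sum_card_fiberwise
        (fun g _ => Finset.mem_image_of_mem f (Finset.mem_univ g))
    have hsum2 : Fintype.card G
        = T.card * (Finset.univ.filter fun g : G => f g = f 1).card := by
      rw [hsum, Finset.sum_congr rfl (fun t ht => ?_), Finset.sum_const, smul_eq_mul]
      rw [hT] at ht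
      obtain ⟨g', -, rfl⟩ := Finset.mem_image.mp ht
      exact hfiber g'
    rw [hcG] at hsum2
    exact Dvd.intro _ hsum2.symm
  -- the characteristic does not divide T.card
  have hp'prime : (ringChar Fq).Prime := CharP.char_is_prime Fq (ringChar Fq)
  have hp'q : ringChar Fq ∣ q := by
    obtain ⟨n, -, hcard⟩ := FiniteField.card Fq (ringChar Fq)
    rw [hcq] at hcard
    rw [hcard]
    exact dvd_pow_self _ (by positivity)
  have hp'k : ¬ (ringChar Fq ∣ T.card) := by
    intro h
    have h1 : ringChar Fq ∣ q - 1 := dvd_trans (dvd_trans h hkdvd) hr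
    have h2 : ringChar Fq ∣ q - (q - 1) := Nat.dvd_sub hp'q h1
    have h3 : q - (q - 1) = 1 := by omega
    rw [h3] at h2
    exact hp'prime.ne_one (Nat.dvd_one.mp h2)
  -- conclude mk δ = 0, i.e. δ ∈ V
  have hpz : (ringChar Fq) • (Submodule.Quotient.mk δ : K ⧸ V) = 0 := by
    have hcast : ((ringChar Fq : Fq)) = 0 := CharP.cast_eq_zero Fq (ringChar Fq)
    rw [← Nat.cast_smul_eq_nsmul Fq, hcast, zero_smul]
  have hδV : δ ∈ V := by
    have h1 : addOrderOf (Submodule.Quotient.mk δ : K ⧸ V) ∣ T.card :=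
      addOrderOf_dvd_of_nsmul_eq_zero hTcard
    have h2 : addOrderOf (Submodule.Quotient.mk δ : K ⧸ V) ∣ ringChar Fq :=
      addOrderOf_dvd_of_nsmul_eq_zero hpz
    have h3 : addOrderOf (Submodule.Quotient.mk δ : K ⧸ V) ∣ Nat.gcd (ringChar Fq) T.card :=
      Nat.dvd_gcd h2 h1
    have h4 : Nat.gcd (ringChar Fq) T.card = 1 :=
      (Nat.Prime.coprime_iff_not_dvd hp'prime).mpr hp'k
    rw [h4, Nat.dvd_one] at h3
    have h5 : (Submodule.Quotient.mk δ : K ⧸ V) = 0 :=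
      AddMonoid.addOrderOf_eq_one_iff.mp h3
    exact (Submodule.Quotient.mk_eq_zero V).mp h5
  -- hence α i ∈ V
  have hαV : α i ∈ V := by
    have hc1 : c - 1 ≠ 0 := by
      intro h
      apply ha1
      have hc1' : c = 1 := by
        have := sub_eq_zero.mp h
        exact this
      rw [← hc, hc1', map_one]
    have hsm := V.smul_mem ((c - 1)⁻¹) hδV
    have e : ((c - 1)⁻¹ : Fq) • δ = α i := by
      rw [hδ, Algebra.smul_def]
      have ham1 : a - 1 = algebraMap Fq K (c - 1) := by
        rw [map_sub, hc, map_one]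
      rw [ham1, ← mul_assoc, ← map_mul, inv_mul_cancel₀ hc1, map_one, one_mul]
    rwa [e] at hsm
  -- contradiction with the coset hypothesis
  apply hne i 1 hi
  have h1K : (((1 : G) : Kˣ) : K) = 1 := rfl
  rw [h1K, mul_one]
  ext x
  simp only [coset, Set.mem_setOf_eq, zero_add]
  constructor
  · rintro ⟨v, hv, rfl⟩
    exact ⟨α i + v, V.add_mem hαV hv, rfl⟩
  · rintro ⟨v, hv, rfl⟩
    exact ⟨x - α i, V.sub_mem hv hαV, by ring⟩
end

section
/- With the same setup (θ a generator of F_{q^m}^*, G ≤ F_q^* of order r, V an F_q-subspace of dimension t, α_1 = 0, α_2,...,α_ℓ as in the coset partition lemma): for all 0 ≤ τ ≤ q^m - 2 and all 1 ≤ i < j ≤ ℓ, the polynomials φ(θ^τ·x + α_i) and φ(x + α_j) are not equal. -/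
open Polynomial Finset
open scoped Classical

lemma coset_eq_of_sub_mem {Fq K : Type*} [Field Fq] [Field K] [Algebra Fq K]
    (V : Submodule Fq K) {a b : K} (hab : a - b ∈ V) :
    coset (V : Set K) a = coset (V : Set K) b := by
  ext x
  simp only [coset, Set.mem_setOf_eq]
  constructor
  · rintro ⟨v, hv, rfl⟩
    exact ⟨(a - b) + v, V.add_mem hab hv, by ring⟩
  · rintro ⟨v, hv, rfl⟩
    exact ⟨v - (a - b), V.sub_mem hv hab, by ring⟩

lemma coset_eq_of_mem_mem {Fq K : Type*} [Field Fq] [Field K] [Algebra Fq K]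
    (V : Submodule Fq K) {a b x : K} (ha : x ∈ coset (V : Set K) a)
    (hb : x ∈ coset (V : Set K) b) :
    coset (V : Set K) a = coset (V : Set K) b := by
  obtain ⟨v, hv, rfl⟩ := ha
  obtain ⟨w, hw, he⟩ := hb
  apply coset_eq_of_sub_mem
  have : a - b = w - v := by linear_combination he
  rw [this]; exact V.sub_mem hw hv

lemma phi_monic {Fq K : Type*} [Field Fq] [Field K] [Fintype K] [Algebra Fq K]
    (G : Subgroup Kˣ) (V : Submodule Fq K) : (phiPoly G V).Monic := by
  apply monic_prod_of_monic
  intro g _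
  apply monic_prod_of_monic
  intro β _
  rw [add_assoc, ← C_add]
  exact monic_X_add_C _

lemma phi_natDegree_s5 {Fq K : Type*} [Field Fq] [Field K] [Fintype K] [Algebra Fq K]
    (G : Subgroup Kˣ) (V : Submodule Fq K) :
    (phiPoly G V).natDegree = Fintype.card G * Fintype.card V := by
  rw [phiPoly, natDegree_prod_of_monic]
  · have : ∀ g : G, (∏ β : V, (X + C ((g : Kˣ) : K) + C (β : K))).natDegree = Fintype.card V := by
      intro g
      rw [natDegree_prod_of_monic]
      · calc ∑ β : V, (X + C ((g : Kˣ) : K) + C (β : K)).natDegree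
            = ∑ _β : V, 1 :=
              Finset.sum_congr rfl (fun β _ => by rw [add_assoc, ← C_add, natDegree_X_add_C])
          _ = Fintype.card V := by simp
      · intro β _
        rw [add_assoc, ← C_add]
        exact monic_X_add_C _
    simp [this, card_univ]
  · intro g _
    apply monic_prod_of_monic
    intro β _
    rw [add_assoc, ← C_add]
    exact monic_X_add_C _

lemma phi_eval_shift {Fq K : Type*} [Field Fq] [Field K] [Fintype K] [Algebra Fq K]
    (G : Subgroup Kˣ) (V : Submodule Fq K)
    (hGsub : ∀ g : G, ∃ a : Fq, algebraMap Fq K a = ((g : Kˣ) : K))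
    (a : K) (g : G) (β : V) :
    (phiPoly G V).eval (a * ((g : Kˣ) : K) + (β : K)) = (phiPoly G V).eval a := by
  classical
  simp only [phiPoly, eval_prod, eval_add, eval_X, eval_C]
  -- step 1 : kill β
  have step1 : ∀ x : K, (∏ γ : V, (x + (β : K) + (γ : K))) = ∏ γ : V, (x + (γ : K)) := by
    intro x
    rw [← Equiv.prod_comp (Equiv.addLeft β) (fun γ : V => x + (γ : K))]
    apply Finset.prod_congr rfl
    intro γ _
    simp only [Equiv.coe_addLeft]
    push_cast
    ring
  have e1 : (∏ h : G, ∏ γ : V, (a * ((g : Kˣ) : K) + ((h : Kˣ) : K) + (γ : K)))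
      = ∏ h : G, ∏ γ : V, (a * ((g : Kˣ) : K) + (β : K) + ((h : Kˣ) : K) + (γ : K)) := by
    apply Finset.prod_congr rfl
    intro h _
    rw [← step1 (a * ((g : Kˣ) : K) + ((h : Kˣ) : K))]
    apply Finset.prod_congr rfl
    intro γ _
    ring
  rw [← e1]
  -- step 2 : reindex h ↦ g * h
  rw [← Equiv.prod_comp (Equiv.mulLeft g)
    (fun h : G => ∏ γ : V, (a * ((g : Kˣ) : K) + ((h : Kˣ) : K) + (γ : K)))]
  -- step 3 : inner reindex γ ↦ g • γ and pull out scalars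
  have gne : ((g : Kˣ) : K) ≠ 0 := Units.ne_zero _
  have hmem : ∀ γ : V, ((g : Kˣ) : K) * (γ : K) ∈ V := by
    intro γ
    obtain ⟨c, hc⟩ := hGsub g
    rw [← hc, ← Algebra.smul_def]
    exact V.smul_mem c γ.2
  let f : V → V := fun γ => ⟨((g : Kˣ) : K) * (γ : K), hmem γ⟩
  have finj : Function.Injective f := by
    intro γ γ' hγ
    have := congrArg (fun x : V => (x : K)) hγ
    exact Subtype.ext (mul_left_cancel₀ gne this)
  have fbij : Function.Bijective f := Finite.injective_iff_bijective.mp finj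
  have step3 : ∀ h : G,
      (∏ γ : V, (a * ((g : Kˣ) : K) + ((((Equiv.mulLeft g) h : G) : Kˣ) : K) + (γ : K)))
      = ((g : Kˣ) : K) ^ Fintype.card V * ∏ γ : V, (a + ((h : Kˣ) : K) + (γ : K)) := by
    intro h
    rw [← Equiv.prod_comp (Equiv.ofBijective f fbij)
      (fun γ : V => a * ((g : Kˣ) : K) + ((((Equiv.mulLeft g) h : G) : Kˣ) : K) + (γ : K))]
    have : ∀ γ : V,
        a * ((g : Kˣ) : K) + ((((Equiv.mulLeft g) h : G) : Kˣ) : K) + (((Equiv.ofBijective f fbij) γ : V) : K)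
        = ((g : Kˣ) : K) * (a + ((h : Kˣ) : K) + (γ : K)) := by
      intro γ
      show a * ((g : Kˣ) : K) + (((g * h : G) : Kˣ) : K) + ((g : Kˣ) : K) * (γ : K) = _
      push_cast
      ring
    simp only [this]
    rw [Finset.prod_mul_distrib, Finset.prod_const, card_univ]
  simp only [step3]
  rw [Finset.prod_mul_distrib, Finset.prod_const, card_univ]
  have hg1 : ((g : Kˣ) : K) ^ Fintype.card G = 1 := by
    have hgg : g ^ Fintype.card G = 1 := pow_card_eq_one
    have := congrArg (fun x : G => ((x : Kˣ) : K)) hgg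
    push_cast at this
    simpa using this
  have : (((g : Kˣ) : K) ^ Fintype.card V) ^ Fintype.card G = 1 := by
    rw [← pow_mul, mul_comm, pow_mul, hg1, one_pow]
  rw [this, one_mul]

/-- for `0 ≤ τ ≤ q^m - 2` and `i < j`, the polynomials
`φ(θ^τ x + α_i)` and `φ(x + α_j)` differ. -/
theorem stmt5 (q r m t : ℕ) (hq : IsPrimePow q) (hm : 1 ≤ m) (ht : t ≤ m - 1)
    (hr : r ∣ q - 1)
    (Fq K : Type*) [Field Fq] [Fintype Fq] [Field K] [Fintype K] [Algebra Fq K]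
    (hcq : Fintype.card Fq = q) (hcK : Fintype.card K = q ^ m)
    (V : Submodule Fq K) (hV : Module.finrank Fq V = t)
    (G : Subgroup Kˣ) (hG : Nat.card G = r)
    (hGsub : ∀ g : G, ∃ a : Fq, algebraMap Fq K a = ((g : Kˣ) : K))
    (θ : Kˣ) (hθ : ∀ x : Kˣ, x ∈ Subgroup.zpowers θ)
    (α : Fin ((q ^ (m - t) - 1) / r + 1) → K) (hα0 : α 0 = 0)
    (hne : ∀ (i : Fin ((q ^ (m - t) - 1) / r + 1)) (g : G), i ≠ 0 →
      coset (V : Set K) (α i * ((g : Kˣ) : K)) ≠ coset (V : Set K) 0)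
    (hinj : ∀ (i j : Fin ((q ^ (m - t) - 1) / r + 1)) (gi gj : G), i ≠ 0 → j ≠ 0 →
      coset (V : Set K) (α i * ((gi : Kˣ) : K)) = coset (V : Set K) (α j * ((gj : Kˣ) : K)) →
      i = j ∧ gi = gj)
    (hcover : (⋃ i, ⋃ g : G, coset (V : Set K) (α i * ((g : Kˣ) : K))) = Set.univ)
    (i j : Fin ((q ^ (m - t) - 1) / r + 1)) (hij : i < j) :
    ∀ τ : ℕ, τ ≤ q ^ m - 2 →
      (phiPoly G V).comp (C (((θ : Kˣ) : K) ^ τ) * X + C (α i)) ≠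
      (phiPoly G V).comp (X + C (α j)) := by
  classical
  intro τ _ h
  set p := phiPoly G V with hp
  -- evaluating the equality at 0 : φ(α i) = φ(α j)
  have h0 : p.eval (α i) = p.eval (α j) := by
    have := congrArg (Polynomial.eval (0 : K)) h
    simpa [Polynomial.eval_comp] using this
  have hj0 : j ≠ 0 := by
    intro hj
    rw [hj] at hij
    exact absurd hij (Fin.not_lt_zero i)
  have hij' : i ≠ j := ne_of_lt hij
  set cG := Fintype.card G
  set cV := Fintype.card V
  have hcGV : 0 < cG * cV := Nat.mul_pos Fintype.card_pos Fintype.card_pos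
  set v := p.eval (α i) with hv
  set ψ := p - C v with hψ
  have hψne : ψ ≠ 0 := by
    intro hz
    have hpz : p = C v := by rwa [sub_eq_zero] at hz
    have := phi_natDegree_s5 G V
    rw [← hp, hpz, natDegree_C] at this
    exact absurd this.symm hcGV.ne'
  have hψdeg : ψ.natDegree = cG * cV := by
    rw [hψ, natDegree_sub_C, hp, phi_natDegree_s5]
  -- root-count bound
  have key : ∀ S : Finset K, (∀ x ∈ S, ψ.eval x = 0) → S.card ≤ cG * cV := by
    intro S hS
    have hsub : S ⊆ ψ.roots.toFinset := by
      intro x hx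
      rw [Multiset.mem_toFinset, mem_roots hψne]
      exact hS x hx
    calc S.card ≤ ψ.roots.toFinset.card := Finset.card_le_card hsub
      _ ≤ Multiset.card ψ.roots := Multiset.toFinset_card_le _
      _ ≤ ψ.natDegree := card_roots' ψ
      _ = cG * cV := hψdeg
  -- the block map
  set f : Fin ((q ^ (m - t) - 1) / r + 1) → G × V → K :=
    fun k pr => α k * ((pr.1 : Kˣ) : K) + (pr.2 : K) with hf
  have hmemcoset : ∀ k (pr : G × V), f k pr ∈ coset (V : Set K) (α k * ((pr.1 : Kˣ) : K)) :=
    fun k pr => ⟨(pr.2 : K), pr.2.2, rfl⟩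
  have hfinj : ∀ k, k ≠ 0 → Function.Injective (f k) := by
    intro k hk pr pr' he
    have hcos : coset (V : Set K) (α k * ((pr.1 : Kˣ) : K))
        = coset (V : Set K) (α k * ((pr'.1 : Kˣ) : K)) :=
      coset_eq_of_mem_mem V (hmemcoset k pr) (he ▸ hmemcoset k pr')
    have hgg : pr.1 = pr'.1 := (hinj k k pr.1 pr'.1 hk hk hcos).2
    have hvv : pr.2 = pr'.2 := by
      apply Subtype.ext
      have := he
      rw [hf] at this
      simp only [hgg] at this
      exact add_left_cancel this
    exact Prod.ext hgg hvv
  have hTcard : ∀ k, k ≠ 0 → ((univ : Finset (G × V)).image (f k)).card = cG * cV := by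
    intro k hk
    rw [Finset.card_image_of_injective _ (hfinj k hk), card_univ, Fintype.card_prod]
  -- roots coming from a block with φ(α k) = v
  have hroot : ∀ k, p.eval (α k) = v → ∀ pr : G × V, ψ.eval (f k pr) = 0 := by
    intro k hk pr
    rw [hψ, eval_sub, eval_C, hf]
    have := phi_eval_shift G V hGsub (α k) pr.1 pr.2
    rw [← hp] at this
    rw [this, hk, sub_self]
  by_cases hi : i = 0
  · -- case i = 0 : α i = 0, use the covering to find the block of α j plus V itself
    have hαi : α i = 0 := by rw [hi, hα0]
    have hjmem : α j ∈ (⋃ k, ⋃ g : G, coset (V : Set K) (α k * ((g : Kˣ) : K))) := by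
      rw [hcover]; trivial
    rw [Set.mem_iUnion] at hjmem
    obtain ⟨k, hjmem⟩ := hjmem
    rw [Set.mem_iUnion] at hjmem
    obtain ⟨g₀, hjmem⟩ := hjmem
    have hk0 : k ≠ 0 := by
      intro hk
      rw [hk, hα0, zero_mul] at hjmem
      apply hne j 1 hj0
      apply coset_eq_of_mem_mem V _ hjmem
      exact ⟨0, V.zero_mem, by simp⟩
    -- φ(α k) = v
    obtain ⟨γ₀, hγ₀, hje⟩ := hjmem
    have hφk : p.eval (α k) = v := by
      have h1 : p.eval (α j) = p.eval (α k) := by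
        rw [hje]
        exact (hp ▸ phi_eval_shift G V hGsub (α k) g₀ ⟨γ₀, hγ₀⟩ : _)
      rw [← h1, ← h0, hv]
    -- all of V is a root set too
    have hrootV : ∀ γ : V, ψ.eval (γ : K) = 0 := by
      intro γ
      rw [hψ, eval_sub, eval_C]
      have := phi_eval_shift G V hGsub 0 1 γ
      rw [← hp] at this
      simp only [zero_mul, zero_add] at this
      rw [this, hv, hαi, sub_self]
    set T := (univ : Finset (G × V)).image (f k) with hT
    set T' := (univ : Finset V).image (fun γ : V => (γ : K)) with hT'
    have hdisj : Disjoint T T' := by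
      rw [Finset.disjoint_left]
      intro x hx hx'
      rw [hT, Finset.mem_image] at hx
      obtain ⟨pr, _, rfl⟩ := hx
      rw [hT', Finset.mem_image] at hx'
      obtain ⟨γ, _, hγ⟩ := hx'
      apply hne k pr.1 hk0
      apply coset_eq_of_mem_mem V (hmemcoset k pr)
      exact ⟨(γ : K), γ.2, by rw [← hγ, zero_add]⟩
    have hcard : (T ∪ T').card = cG * cV + cV := by
      rw [Finset.card_union_of_disjoint hdisj, hTcard k hk0, hT',
        Finset.card_image_of_injective _ Subtype.coe_injective, card_univ]
    have hallroots : ∀ x ∈ T ∪ T', ψ.eval x = 0 := by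
      intro x hx
      rw [Finset.mem_union] at hx
      rcases hx with hx | hx
      · rw [hT, Finset.mem_image] at hx
        obtain ⟨pr, _, rfl⟩ := hx
        exact hroot k hφk pr
      · rw [hT', Finset.mem_image] at hx
        obtain ⟨γ, _, rfl⟩ := hx
        exact hrootV γ
    have := key _ hallroots
    rw [hcard] at this
    have hcV : 0 < cV := Fintype.card_pos
    omega
  · -- case i ≠ 0 : block of α i plus the extra root α j
    have hjT : α j ∉ (univ : Finset (G × V)).image (f i) := by
      intro hx
      rw [Finset.mem_image] at hx
      obtain ⟨pr, _, hx⟩ := hx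
      have hcos : coset (V : Set K) (α i * ((pr.1 : Kˣ) : K))
          = coset (V : Set K) (α j * (((1 : G) : Kˣ) : K)) := by
        apply coset_eq_of_mem_mem V (hx ▸ hmemcoset i pr)
        exact ⟨0, V.zero_mem, by simp⟩
      exact hij' (hinj i j pr.1 1 hi hj0 hcos).1
    set S := insert (α j) ((univ : Finset (G × V)).image (f i)) with hS
    have hcard : S.card = cG * cV + 1 := by
      rw [hS, Finset.card_insert_of_notMem hjT, hTcard i hi]
    have hallroots : ∀ x ∈ S, ψ.eval x = 0 := by
      intro x hx
      rw [hS, Finset.mem_insert] at hx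
      rcases hx with rfl | hx
      · rw [hψ, eval_sub, eval_C, ← h0, hv, sub_self]
      · rw [Finset.mem_image] at hx
        obtain ⟨pr, _, rfl⟩ := hx
        exact hroot i rfl pr
    have := key _ hallroots
    rw [hcard] at this
    omega
end

section
/- Let x = (x_0,...,x_{N-1}) and y = (y_0,...,y_{N-1}) be sequences over F_{q^m} defined by x_k = f(θ^k) and y_k = h(θ^k), where f, h are polynomials over F_{q^m} of degree at most d ≥ 1 with f ≠ h as polynomials, θ is a generator of F_{q^m}^*, and N = q^m - 1. Then the Hamming correlation H_{x,y}(τ) = #{0 ≤ k ≤ N-1 : x_k = y_{k+τ mod N}} is at most d for every τ. -/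
open Polynomial Finset
open scoped Classical

/-- Hamming correlation of two polynomial-generated sequences of
length `N = q^m - 1` is bounded by the degree bound `d`, provided
`f(x) - h(θ^τ x)` is not the zero polynomial. -/
theorem stmt6 (q m d : ℕ) (hq : IsPrimePow q) (hm : 1 ≤ m) (hd : 1 ≤ d)
    (K : Type*) [Field K] [Fintype K] (hcK : Fintype.card K = q ^ m)
    (θ : Kˣ) (hθ : ∀ x : Kˣ, x ∈ Subgroup.zpowers θ)
    (f h : Polynomial K) (hf : f.natDegree ≤ d) (hh : h.natDegree ≤ d) (hfh : f ≠ h) :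
    ∀ τ : ℕ, f - h.comp (C (((θ : Kˣ) : K) ^ τ) * X) ≠ 0 →
      ((Finset.range (q ^ m - 1)).filter (fun k =>
        f.eval (((θ : Kˣ) : K) ^ k) =
        h.eval (((θ : Kˣ) : K) ^ ((k + τ) % (q ^ m - 1))))).card ≤ d := by
  intro τ hg
  set c : K := ((θ : Kˣ) : K) ^ τ with hc
  set g : Polynomial K := f - h.comp (C c * X) with hgdef
  have hcardU : Fintype.card Kˣ = q ^ m - 1 := by
    rw [Fintype.card_units, hcK]
  have horder : orderOf θ = q ^ m - 1 := by
    rw [← hcardU, ← Nat.card_eq_fintype_card]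
    exact orderOf_eq_card_of_forall_mem_zpowers hθ
  -- rewrite the exponent modulo N
  have hmodpow : ∀ k : ℕ, ((θ : Kˣ) : K) ^ ((k + τ) % (q ^ m - 1)) =
      ((θ : Kˣ) : K) ^ (k + τ) := by
    intro k
    have : θ ^ ((k + τ) % (q ^ m - 1)) = θ ^ (k + τ) := by
      rw [← horder]; exact pow_mod_orderOf θ (k + τ)
    exact_mod_cast congrArg (Units.val) this
  -- membership in filter implies root of g
  have hroot : ∀ k ∈ (Finset.range (q ^ m - 1)).filter (fun k =>
      f.eval (((θ : Kˣ) : K) ^ k) =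
      h.eval (((θ : Kˣ) : K) ^ ((k + τ) % (q ^ m - 1)))),
      g.eval (((θ : Kˣ) : K) ^ k) = 0 := by
    intro k hk
    rw [Finset.mem_filter] at hk
    have hk2 := hk.2
    rw [hmodpow] at hk2
    simp only [hgdef, eval_sub, eval_comp, eval_mul, eval_C, eval_X]
    rw [hk2, pow_add]
    ring_nf
    rw [hc, sub_self]
  have hdeg : g.natDegree ≤ d := by
    refine le_trans (natDegree_sub_le _ _) (max_le hf ?_)
    have hcne : c ≠ 0 := by
      simp [hc]
    rw [natDegree_comp]
    have : (C c * X).natDegree = 1 := by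
      simpa using natDegree_C_mul_X c hcne
    rw [this, mul_one]; exact hh
  -- injective map k ↦ θ^k into the roots of g
  have hinj : Set.InjOn (fun k : ℕ => ((θ : Kˣ) : K) ^ k)
      ((Finset.range (q ^ m - 1)).filter (fun k =>
      f.eval (((θ : Kˣ) : K) ^ k) =
      h.eval (((θ : Kˣ) : K) ^ ((k + τ) % (q ^ m - 1)))) : Finset ℕ) := by
    intro a ha b hb hab
    rw [Finset.mem_coe, Finset.mem_filter, Finset.mem_range] at ha hb
    have ha' : a < orderOf θ := horder ▸ ha.1
    have hb' : b < orderOf θ := horder ▸ hb.1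
    have : θ ^ a = θ ^ b := Units.ext (by simpa using hab)
    exact pow_injOn_Iio_orderOf ha' hb' this
  calc ((Finset.range (q ^ m - 1)).filter _).card
      ≤ g.roots.toFinset.card := by
        apply Finset.card_le_card_of_injOn (fun k => ((θ : Kˣ) : K) ^ k)
        · intro k hk
          rw [Finset.mem_coe, Multiset.mem_toFinset, mem_roots hg]
          exact IsRoot.def.mpr (hroot k hk)
        · exact hinj
    _ ≤ Multiset.card g.roots := g.roots.toFinset_card_le
    _ ≤ g.natDegree := g.card_roots'
    _ ≤ d := hdeg
end

section
/- Let q be a prime power, r a divisor of q−1 with r ≥ 2, G ≤ F_q^* of order r, V ≤ F_{q^m} of F_q-dimension t, and φ(x) = ∏_{g∈G}∏_{β∈V}(x+g+β). Then the number of distinct values taken by φ on F_{q^m} is exactly 1 + (q^{m-t}−1)/r. -/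
open Polynomial Finset
open scoped Classical

set_option linter.unusedSectionVars false

section Aux

variable {Fq K : Type*} [Field Fq] [Fintype Fq] [Field K] [Fintype K] [Algebra Fq K]
variable (G : Subgroup Kˣ) (V : Submodule Fq K)

lemma phi_monic_s16 : (phiPoly G V).Monic := by
  refine monic_prod_of_monic _ _ fun g _ => monic_prod_of_monic _ _ fun β _ => ?_
  have := monic_X_add_C (((g : Kˣ) : K) + (β : K))
  rwa [C_add, ← add_assoc] at this


variable {G V} in
lemma G_mul_mem (hGsub : ∀ g : G, ∃ a : Fq, algebraMap Fq K a = ((g : Kˣ) : K))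
    (g : G) {z : K} (hz : z ∈ V) : ((g : Kˣ) : K) * z ∈ V := by
  obtain ⟨a, ha⟩ := hGsub g
  rw [← ha, ← Algebra.smul_def]
  exact V.smul_mem a hz

lemma eval_add_mem (x : K) {v : K} (hv : v ∈ V) :
    (phiPoly G V).eval (x + v) = (phiPoly G V).eval x := by
  rw [phi_eval, phi_eval]
  refine Finset.prod_congr rfl fun g _ => ?_
  refine Fintype.prod_equiv (Equiv.addLeft (⟨v, hv⟩ : V)) _ _ fun β => ?_
  simp only [Equiv.coe_addLeft, Submodule.coe_add]
  ring

variable {G V} in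
lemma eval_G_mul (hGsub : ∀ g : G, ∃ a : Fq, algebraMap Fq K a = ((g : Kˣ) : K))
    (g' : G) (x : K) :
    (phiPoly G V).eval (((g' : Kˣ) : K) * x) = (phiPoly G V).eval x := by
  set c : K := ((g' : Kˣ) : K) with hc
  have hbij : Function.Bijective (fun β : V => (⟨c * (β : K), G_mul_mem hGsub g' β.2⟩ : V)) := by
    rw [← Finite.injective_iff_bijective]
    intro b1 b2 h
    have h' : c * (b1 : K) = c * (b2 : K) := congrArg Subtype.val h
    exact Subtype.ext (mul_left_cancel₀ (Units.ne_zero (g' : Kˣ)) h')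
  have hstep : ∏ g : G, ∏ β : V, (c * x + c * ((g : Kˣ) : K) + c * (β : K))
      = (phiPoly G V).eval (c * x) := by
    rw [phi_eval]
    refine Fintype.prod_bijective (fun g => (g' * g : G)) (Group.mulLeft_bijective g') _ _
      fun g => ?_
    refine Fintype.prod_bijective _ hbij _ _ fun β => ?_
    simp [hc, Subgroup.coe_mul, Units.val_mul, mul_assoc]
  have hone : c ^ (Fintype.card V * Fintype.card G) = 1 := by
    have h1 : g' ^ (Fintype.card G) = 1 := pow_card_eq_one
    have h2 : c ^ (Fintype.card G) = 1 := by
      rw [hc, ← Units.val_pow_eq_pow_val, ← Subgroup.coe_pow, h1]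
      simp
    rw [mul_comm, pow_mul, h2, one_pow]
  calc (phiPoly G V).eval (c * x)
      = ∏ g : G, ∏ β : V, (c * (x + ((g : Kˣ) : K) + (β : K))) := by
        rw [← hstep]
        exact Finset.prod_congr rfl fun g _ => Finset.prod_congr rfl fun β _ => by ring
    _ = ∏ g : G, (c ^ (Fintype.card V) * ∏ β : V, (x + ((g : Kˣ) : K) + (β : K))) := by
        refine Finset.prod_congr rfl fun g _ => ?_
        rw [Finset.prod_mul_distrib, Finset.prod_const, Finset.card_univ]
    _ = (c ^ (Fintype.card V)) ^ (Fintype.card G)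
          * ∏ g : G, ∏ β : V, (x + ((g : Kˣ) : K) + (β : K)) := by
        rw [Finset.prod_mul_distrib, Finset.prod_const, Finset.card_univ]
    _ = (phiPoly G V).eval x := by rw [← pow_mul, hone, one_mul, phi_eval]


/-- The orbit of `x` under the action `(g, v) • x = g x + v`. -/
noncomputable def orbitF (x : K) : Finset K :=
  Finset.image (fun p : G × V => ((p.1 : Kˣ) : K) * x + ((p.2 : V) : K)) Finset.univ

variable {G V}

lemma mem_orbitF {x y : K} :
    y ∈ orbitF G V x ↔ ∃ g : G, ∃ v : V, y = ((g : Kˣ) : K) * x + (v : K) := by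
  simp [orbitF, eq_comm]

lemma self_mem_orbitF (x : K) : x ∈ orbitF G V x :=
  mem_orbitF.2 ⟨1, 0, by simp⟩

lemma eval_eq_of_mem_orbitF (hGsub : ∀ g : G, ∃ a : Fq, algebraMap Fq K a = ((g : Kˣ) : K))
    {x y : K} (hy : y ∈ orbitF G V x) :
    (phiPoly G V).eval y = (phiPoly G V).eval x := by
  obtain ⟨g, v, rfl⟩ := mem_orbitF.1 hy
  rw [eval_add_mem G V _ v.2, eval_G_mul hGsub]

lemma orbitF_symm (hGsub : ∀ g : G, ∃ a : Fq, algebraMap Fq K a = ((g : Kˣ) : K))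
    {x y : K} (hy : y ∈ orbitF G V x) : x ∈ orbitF G V y := by
  obtain ⟨g, v, rfl⟩ := mem_orbitF.1 hy
  refine mem_orbitF.2 ⟨g⁻¹, ⟨-(((g⁻¹ : G) : Kˣ) : K) * (v : K), ?_⟩, ?_⟩
  · rw [neg_mul]
    exact neg_mem (G_mul_mem hGsub g⁻¹ v.2)
  · have hg : (((g⁻¹ : G) : Kˣ) : K) * (((g : G) : Kˣ) : K) = 1 := by
      rw [← Units.val_mul, ← Subgroup.coe_mul, inv_mul_cancel]
      simp
    show x = (((g⁻¹ : G) : Kˣ) : K) * ((((g : G) : Kˣ) : K) * x + (v : K))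
      + (-(((g⁻¹ : G) : Kˣ) : K) * (v : K))
    linear_combination (-x) * hg

lemma orbitF_trans (hGsub : ∀ g : G, ∃ a : Fq, algebraMap Fq K a = ((g : Kˣ) : K))
    {x y z : K} (hz : z ∈ orbitF G V y) (hy : y ∈ orbitF G V x) : z ∈ orbitF G V x := by
  obtain ⟨g2, v2, rfl⟩ := mem_orbitF.1 hz
  obtain ⟨g1, v1, rfl⟩ := mem_orbitF.1 hy
  refine mem_orbitF.2 ⟨g2 * g1, ⟨(((g2 : G) : Kˣ) : K) * (v1 : K) + (v2 : K), ?_⟩, ?_⟩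
  · exact add_mem (G_mul_mem hGsub g2 v1.2) v2.2
  · push_cast
    ring

lemma orbitF_card_of_not_mem {x : K} (hGsub : ∀ g : G, ∃ a : Fq, algebraMap Fq K a = ((g : Kˣ) : K))
    (hx : x ∉ V) :
    (orbitF G V x).card = Fintype.card G * Fintype.card V := by
  rw [orbitF, Finset.card_image_of_injective _ ?_, Finset.card_univ, Fintype.card_prod]
  rintro ⟨g1, v1⟩ ⟨g2, v2⟩ h
  simp only at h
  obtain ⟨a1, ha1⟩ := hGsub g1
  obtain ⟨a2, ha2⟩ := hGsub g2
  have ha : a1 = a2 := by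
    by_contra hne
    have hmem : (a1 - a2) • x ∈ V := by
      have : (a1 - a2) • x = (v2 : K) - (v1 : K) := by
        rw [Algebra.smul_def, map_sub, ha1, ha2]
        linear_combination h
      rw [this]
      exact sub_mem v2.2 v1.2
    have : x ∈ V := by
      have := V.smul_mem (a1 - a2)⁻¹ hmem
      rwa [smul_smul, inv_mul_cancel₀ (sub_ne_zero.2 hne), one_smul] at this
    exact hx this
  have hg : g1 = g2 := by
    apply Subtype.ext; apply Units.ext
    rw [← ha1, ← ha2, ha]
  have hv : (v1 : K) = (v2 : K) := by
    have h2 := h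
    rw [hg] at h2
    exact add_left_cancel h2
  exact Prod.ext hg (Subtype.ext hv)

lemma orbitF_of_mem (hGsub : ∀ g : G, ∃ a : Fq, algebraMap Fq K a = ((g : Kˣ) : K))
    {x : K} (hx : x ∈ V) :
    orbitF G V x = Finset.image (fun v : V => (v : K)) Finset.univ := by
  ext y
  simp only [Finset.mem_image, Finset.mem_univ, true_and]
  constructor
  · rintro hy
    obtain ⟨g, v, rfl⟩ := mem_orbitF.1 hy
    exact ⟨⟨_, add_mem (G_mul_mem hGsub g hx) v.2⟩, rfl⟩
  · rintro ⟨w, rfl⟩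
    exact mem_orbitF.2 ⟨1, ⟨(w : K) - x, sub_mem w.2 hx⟩, by simp⟩

lemma orbitF_card_of_mem (hGsub : ∀ g : G, ∃ a : Fq, algebraMap Fq K a = ((g : Kˣ) : K))
    {x : K} (hx : x ∈ V) : (orbitF G V x).card = Fintype.card V := by
  rw [orbitF_of_mem hGsub hx,
    Finset.card_image_of_injective _ Subtype.val_injective, Finset.card_univ]


lemma mem_orbit_of_eval_eq (hGsub : ∀ g : G, ∃ a : Fq, algebraMap Fq K a = ((g : Kˣ) : K))
    {x y : K} (h : (phiPoly G V).eval x = (phiPoly G V).eval y) :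
    y ∈ orbitF G V x := by
  by_contra hy
  have hdisj : Disjoint (orbitF G V x) (orbitF G V y) := by
    rw [Finset.disjoint_left]
    intro z hzx hzy
    exact hy (orbitF_trans hGsub (orbitF_symm hGsub hzy) hzx)
  set p := phiPoly G V - C ((phiPoly G V).eval x) with hp
  have hd : p.natDegree = Fintype.card G * Fintype.card V := by
    rw [hp, natDegree_sub_C, phi_natDegree]
  have hp0 : p ≠ 0 := by
    intro h0
    have h1 : Fintype.card G * Fintype.card V = 0 := by rw [← hd, h0, natDegree_zero]
    have := Nat.mul_pos (Fintype.card_pos (α := G)) (Fintype.card_pos (α := V))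
    omega
  have hsub : orbitF G V x ∪ orbitF G V y ⊆ p.roots.toFinset := by
    intro z hz
    rw [Multiset.mem_toFinset, mem_roots hp0]
    rcases Finset.mem_union.1 hz with hz | hz
    · simp [hp, IsRoot, eval_eq_of_mem_orbitF hGsub hz]
    · simp [hp, IsRoot, eval_eq_of_mem_orbitF hGsub hz, h]
  have hcard : (orbitF G V x).card + (orbitF G V y).card
      ≤ Fintype.card G * Fintype.card V := by
    rw [← Finset.card_union_of_disjoint hdisj]
    calc (orbitF G V x ∪ orbitF G V y).card
        ≤ p.roots.toFinset.card := Finset.card_le_card hsub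
      _ ≤ Multiset.card p.roots := p.roots.toFinset_card_le
      _ ≤ p.natDegree := p.card_roots'
      _ = _ := hd
  have hVpos : 0 < Fintype.card V := Fintype.card_pos
  have hxpos : 0 < (orbitF G V x).card := Finset.card_pos.2 ⟨x, self_mem_orbitF x⟩
  have hypos : 0 < (orbitF G V y).card := Finset.card_pos.2 ⟨y, self_mem_orbitF y⟩
  by_cases hxV : x ∈ V
  · by_cases hyV : y ∈ V
    · exact hy (by
        rw [orbitF_of_mem hGsub hxV]
        exact Finset.mem_image.2 ⟨⟨y, hyV⟩, Finset.mem_univ _, rfl⟩)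
    · have h1 := orbitF_card_of_mem hGsub hxV
      have h2 := orbitF_card_of_not_mem hGsub hyV
      omega
  · have h1 := orbitF_card_of_not_mem hGsub hxV
    omega

end Aux

/-- for `r ≥ 2`, the number of distinct values taken by `φ` on
`F_{q^m}` is exactly `1 + (q^{m-t} - 1)/r`. -/
theorem stmt16 (q r m t : ℕ) (hq : IsPrimePow q) (hm : 1 ≤ m) (ht : t ≤ m - 1)
    (hr : r ∣ q - 1)
    (Fq K : Type*) [Field Fq] [Fintype Fq] [Field K] [Fintype K] [Algebra Fq K]
    (hcq : Fintype.card Fq = q) (hcK : Fintype.card K = q ^ m)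
    (V : Submodule Fq K) (hV : Module.finrank Fq V = t)
    (G : Subgroup Kˣ) (hG : Nat.card G = r)
    (hGsub : ∀ g : G, ∃ a : Fq, algebraMap Fq K a = ((g : Kˣ) : K))
    (hr2 : 2 ≤ r) :
    (Finset.image (fun x : K => (phiPoly G V).eval x) Finset.univ).card
      = 1 + (q ^ (m - t) - 1) / r := by
  classical
  set φ := phiPoly G V with hφ
  set img := Finset.image (fun x : K => φ.eval x) Finset.univ with himg
  have hfiber : ∀ x : K,
      Finset.filter (fun y => φ.eval y = φ.eval x) Finset.univ = orbitF G V x := by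
    intro x
    ext y
    simp only [Finset.mem_filter, Finset.mem_univ, true_and]
    exact ⟨fun h => mem_orbit_of_eval_eq hGsub h.symm, fun h => eval_eq_of_mem_orbitF hGsub h⟩
  have hcardV : Fintype.card V = q ^ t := by
    rw [Module.card_eq_pow_finrank (K := Fq), hcq, hV]
  have hcardG : Fintype.card G = r := by rw [← Nat.card_eq_fintype_card, hG]
  have hsum : Fintype.card K
      = ∑ c ∈ img, (Finset.filter (fun y => φ.eval y = c) Finset.univ).card := by
    rw [← Finset.card_univ]
    exact Finset.card_eq_sum_card_image _ _
  set c0 := φ.eval 0 with hc0def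
  have hc0 : c0 ∈ img := Finset.mem_image_of_mem _ (Finset.mem_univ 0)
  have hfib0 : (Finset.filter (fun y => φ.eval y = c0) Finset.univ).card = q ^ t := by
    rw [hfiber 0, orbitF_card_of_mem hGsub V.zero_mem, hcardV]
  have hfib : ∀ c ∈ img.erase c0,
      (Finset.filter (fun y => φ.eval y = c) Finset.univ).card = r * q ^ t := by
    intro c hc
    obtain ⟨hne, hcimg⟩ := Finset.mem_erase.1 hc
    obtain ⟨x, -, rfl⟩ := Finset.mem_image.1 hcimg
    have hxV : x ∉ V := by
      intro hxV
      apply hne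
      have hx0 : x ∈ orbitF G V 0 :=
        mem_orbitF.2 ⟨1, ⟨x, hxV⟩, by simp⟩
      exact eval_eq_of_mem_orbitF hGsub hx0
    rw [hfiber x, orbitF_card_of_not_mem hGsub hxV, hcardG, hcardV]
  have hmain : Fintype.card K = q ^ t + (img.card - 1) * (r * q ^ t) := by
    rw [hsum, ← Finset.add_sum_erase _ _ hc0, hfib0]
    congr 1
    rw [Finset.sum_congr rfl hfib, Finset.sum_const, smul_eq_mul,
      Finset.card_erase_of_mem hc0]
  have hq2 : 2 ≤ q := hq.two_le
  have ht' : t ≤ m := le_trans ht (Nat.sub_le m 1)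
  have hqt : 0 < q ^ t := pow_pos (by omega) t
  have hN : 1 ≤ img.card := Finset.card_pos.2 ⟨c0, hc0⟩
  have key : q ^ (m - t) = 1 + (img.card - 1) * r := by
    have hqm : q ^ m = q ^ t * q ^ (m - t) := by
      rw [← pow_add]
      congr 1
      omega
    have h1 : q ^ t * q ^ (m - t) = q ^ t * (1 + (img.card - 1) * r) := by
      rw [← hqm, ← hcK, hmain]
      ring
    exact Nat.eq_of_mul_eq_mul_left hqt h1
  have hdiv : (q ^ (m - t) - 1) / r = img.card - 1 := by
    rw [key, Nat.add_sub_cancel_left, Nat.mul_div_cancel _ (by omega : 0 < r)]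
  omega
end

section
/- Let θ be a generator of F_{q^m}^* with m·t as above, G ≤ F_q^* of order r ≥ 2, and suppose θ^τ ∈ G for some 1 ≤ τ ≤ q^m − 2. If additionally φ(x + α θ^{-τ}) = φ(x + α) as polynomials, where α ∉ V and φ(x) = ∏_{g∈G}∏_{β∈V}(x+g+β), then θ^τ = 1 — contradiction; hence no such τ exists. Equivalently: for α ∉ V and u ∈ F_q^* with u ≠ 1, the polynomials φ(x + αu) and φ(x + α) are distinct. -/
open Polynomial Finset
open scoped Classical

/-- for `α ∉ V` and `u ∈ F_q^*` with `u ≠ 1`, the polynomials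
`φ(x + α u)` and `φ(x + α)` are distinct. -/
theorem stmt18 (q r m t : ℕ) (hq : IsPrimePow q) (hm : 1 ≤ m) (ht : t ≤ m - 1)
    (hr : r ∣ q - 1)
    (Fq K : Type*) [Field Fq] [Fintype Fq] [Field K] [Fintype K] [Algebra Fq K]
    (hcq : Fintype.card Fq = q) (hcK : Fintype.card K = q ^ m)
    (V : Submodule Fq K) (hV : Module.finrank Fq V = t)
    (G : Subgroup Kˣ) (hG : Nat.card G = r)
    (hGsub : ∀ g : G, ∃ a : Fq, algebraMap Fq K a = ((g : Kˣ) : K))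
    (hr2 : 2 ≤ r)
    (a : K) (ha : a ∉ V) (u : Fq) (hu0 : u ≠ 0) (hu1 : u ≠ 1) :
    (phiPoly G V).comp (X + C (a * algebraMap Fq K u)) ≠
    (phiPoly G V).comp (X + C a) := by
  intro h
  set u' := algebraMap Fq K u with hu'
  set c := a * (u' - 1) with hc
  -- evaluation form of the hypothesis
  have heval : ∀ x : K, (phiPoly G V).eval (x + a * u') = (phiPoly G V).eval (x + a) := by
    intro x
    have := congrArg (Polynomial.eval x) h
    simpa [eval_comp] using this
  -- root characterization of φ
  have hzero : ∀ z : K, (phiPoly G V).eval z = 0 ↔ ∃ g : G, ∃ β : V, z + ((g : Kˣ) : K) + ((β : V) : K) = 0 := by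
    intro z
    simp only [phiPoly, eval_prod, eval_add, eval_X, eval_C]
    rw [Finset.prod_eq_zero_iff]
    constructor
    · rintro ⟨g, -, hg⟩
      rw [Finset.prod_eq_zero_iff] at hg
      obtain ⟨β, -, hβ⟩ := hg
      exact ⟨g, β, hβ⟩
    · rintro ⟨g, β, hβ⟩
      refine ⟨g, Finset.mem_univ _, Finset.prod_eq_zero (Finset.mem_univ β) hβ⟩
  -- key step: translation by c sends each g ∈ G into some coset g' + V
  have key : ∀ g : G, ∃ g' : G, ∃ β' : V, ((g : Kˣ) : K) + c = ((g' : Kˣ) : K) + (β' : K) := by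
    intro g
    have h0 : (phiPoly G V).eval (-((g : Kˣ) : K)) = 0 := by
      rw [hzero]
      exact ⟨g, 0, by simp⟩
    have h1 : (phiPoly G V).eval (-((g : Kˣ) : K) - c) = 0 := by
      have h2 := heval (-((g : Kˣ) : K) - a * u')
      have e1 : -((g : Kˣ) : K) - a * u' + a * u' = -((g : Kˣ) : K) := by ring
      have e2 : -((g : Kˣ) : K) - a * u' + a = -((g : Kˣ) : K) - c := by rw [hc]; ring
      rw [e1, e2] at h2
      rw [← h2]; exact h0
    rw [hzero] at h1
    obtain ⟨g', β', hgb⟩ := h1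
    exact ⟨g', β', by linear_combination -hgb⟩
  -- conclude c ∈ V
  have hcV : c ∈ V := by
    by_cases h1 : (1 : K) ∈ V
    · -- then the image of Fq lies in V
      have hFq : ∀ x : Fq, algebraMap Fq K x ∈ V := by
        intro x
        have := V.smul_mem x h1
        simpa [Algebra.smul_def] using this
      obtain ⟨g', β', hgb⟩ := key 1
      obtain ⟨x, hx⟩ := hGsub g'
      have hg'V : ((g' : Kˣ) : K) ∈ V := hx ▸ hFq x
      have : c = ((g' : Kˣ) : K) + (β' : K) - 1 := by
        have : ((1 : G) : Kˣ) = 1 := rfl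
        rw [this] at hgb
        push_cast at hgb
        linear_combination hgb
      rw [this]
      exact V.sub_mem (V.add_mem hg'V β'.2) h1
    · -- images of nonzero Fq elements are not in V
      have hinj : ∀ x : Fq, algebraMap Fq K x ∈ V → x = 0 := by
        intro x hxV
        by_contra hx0
        apply h1
        have := V.smul_mem x⁻¹ hxV
        rw [Algebra.smul_def, ← map_mul, inv_mul_cancel₀ hx0, map_one] at this
        exact this
      choose e v hev using key
      -- e is injective
      have einj : Function.Injective e := by
        intro g1 g2 he
        obtain ⟨x1, hx1⟩ := hGsub g1
        obtain ⟨x2, hx2⟩ := hGsub g2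
        have h12 : algebraMap Fq K (x1 - x2) ∈ V := by
          have e1 := hev g1
          have e2 := hev g2
          rw [he] at e1
          have : algebraMap Fq K (x1 - x2) = (v g1 : K) - (v g2 : K) := by
            rw [map_sub, hx1, hx2]
            linear_combination e1 - e2
          rw [this]
          exact V.sub_mem (v g1).2 (v g2).2
        have hx12 : x1 = x2 := sub_eq_zero.mp (hinj _ h12)
        apply Subtype.ext
        apply Units.ext
        rw [← hx1, ← hx2, hx12]
      -- sum over G
      have hsum : ∑ g : G, (((g : Kˣ) : K) + c) = ∑ g : G, (((e g : Kˣ) : K) + ((v g : V) : K)) :=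
        Finset.sum_congr rfl fun g _ => hev g
      have hbij : Function.Bijective e := (Finite.injective_iff_bijective).mp einj
      have hre : ∑ g : G, ((e g : Kˣ) : K) = ∑ g : G, ((g : Kˣ) : K) :=
        Fintype.sum_bijective e hbij _ _ (fun g => rfl)
      have hrc : (Fintype.card G) • c = ∑ g : G, ((v g : V) : K) := by
        have l1 : ∑ g : G, (((g : Kˣ) : K) + c) = (∑ g : G, ((g : Kˣ) : K)) + (Fintype.card G) • c := by
          rw [Finset.sum_add_distrib, Finset.sum_const, Finset.card_univ]
        have l2 : ∑ g : G, (((e g : Kˣ) : K) + ((v g : V) : K))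
            = (∑ g : G, ((g : Kˣ) : K)) + ∑ g : G, ((v g : V) : K) := by
          rw [Finset.sum_add_distrib, hre]
        rw [l1, l2] at hsum
        exact add_left_cancel hsum
      have hrcV : (r : K) * c ∈ V := by
        have hcard : Fintype.card G = r := by rw [← hG, Nat.card_eq_fintype_card]
        have : ((r : ℕ) : K) * c = (Fintype.card G) • c := by rw [hcard, nsmul_eq_mul]
        rw [this, hrc]
        exact V.sum_mem fun g _ => (v g).2
      -- r is invertible in Fq
      have hrFq : (r : Fq) ≠ 0 := by
        intro h0
        set p := ringChar Fq with hp
        haveI : CharP Fq p := ringChar.charP Fq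
        have hpr : p ∣ r := (CharP.cast_eq_zero_iff Fq p r).mp h0
        obtain ⟨n, hprime, hcard'⟩ := FiniteField.card Fq p
        have hpq : p ∣ q := by
          rw [← hcq, hcard']
          exact dvd_pow_self p n.pos.ne'
        have hpq1 : p ∣ q - 1 := hpr.trans hr
        have hq2 : 2 ≤ q := hq.two_le
        have : p ∣ 1 := by
          have := Nat.dvd_sub hpq hpq1
          rwa [Nat.sub_sub_self (by omega)] at this
        have := Nat.dvd_one.mp this
        exact absurd this hprime.one_lt.ne'
      have : (r : Fq)⁻¹ • ((r : K) * c) ∈ V := V.smul_mem _ hrcV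
      have heq : (r : Fq)⁻¹ • ((r : K) * c) = c := by
        rw [Algebra.smul_def, ← mul_assoc, ← map_natCast (algebraMap Fq K) r, ← map_mul,
          inv_mul_cancel₀ hrFq, map_one, one_mul]
      rwa [heq] at this
  -- conclude a ∈ V, contradiction
  apply ha
  have h2 : u - 1 ≠ 0 := sub_ne_zero.mpr hu1
  have := V.smul_mem (u - 1)⁻¹ hcV
  have heq : (u - 1)⁻¹ • c = a := by
    rw [Algebra.smul_def, hc, hu']
    rw [show u' - 1 = algebraMap Fq K (u - 1) by rw [map_sub, map_one]]
    rw [mul_comm a, ← mul_assoc, ← map_mul, inv_mul_cancel₀ h2, map_one, one_mul]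
  rwa [heq] at this
end
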